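/- Let {[l_u, r_u]}_{u ∈ V} be a normalized circular-arc representation of a graph G = (V, E). Let xy ∈ E and let z, w ∈ V be vertices such that the left endpoints occur in the clockwise circular order l_x < l_z < l_y < l_w. Then at least one of z, w does not avoid the edge xy. -/

import Mathlib

/-!
Graphs here are finite, undirected, without parallel edges, and have a loop at
every vertex.  We model them as symmetric reflexive relations.
-/

structure LoopGraph (V : Type) where
  Adj : V → V → Prop
  symm : ∀ u v, Adj u v → Adj v u
  refl : ∀ u, Adj u u

namespace LoopGraph

variable {V W : Type}

/-- Closed neighbourhood `N[u]`. -/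
def nbhd (G : LoopGraph V) (u : V) : Set V := {v | G.Adj u v}

/-- `u` is a universal vertex. -/
def Universal (G : LoopGraph V) (u : V) : Prop := ∀ v, G.Adj u v

/-- `u ≠ v` are true twins if `N[u] = N[v]`. -/
def TrueTwins (G : LoopGraph V) (u v : V) : Prop := u ≠ v ∧ G.nbhd u = G.nbhd v

/-- `uv` is an inclusion edge: it is an edge and `N[u] ⊆ N[v]` or `N[v] ⊆ N[u]`. -/
def InclusionEdge (G : LoopGraph V) (u v : V) : Prop :=
  G.Adj u v ∧ (G.nbhd u ⊆ G.nbhd v ∨ G.nbhd v ⊆ G.nbhd u)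

/-- `u` overlaps `v`: they are adjacent and their closed neighbourhoods are incomparable. -/
def Overlaps (G : LoopGraph V) (u v : V) : Prop :=
  G.Adj u v ∧ ¬ G.nbhd u ⊆ G.nbhd v ∧ ¬ G.nbhd v ⊆ G.nbhd u

/-- `{u,v}` is a spanning pair. -/
def SpanningPair (G : LoopGraph V) (u v : V) : Prop :=
  (∀ x, ¬ G.Adj v x → G.nbhd x ⊆ G.nbhd u) ∧
  (∀ y, ¬ G.Adj u y → G.nbhd y ⊆ G.nbhd v)

/-- `uv` is a 2-overlap edge: an overlap edge forming a spanning pair. -/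
def TwoOverlapEdge (G : LoopGraph V) (u v : V) : Prop :=
  G.Overlaps u v ∧ G.SpanningPair u v

/-- `uv` is a 1-overlap edge: an overlap edge not forming a spanning pair. -/
def OneOverlapEdge (G : LoopGraph V) (u v : V) : Prop :=
  G.Overlaps u v ∧ ¬ G.SpanningPair u v

/-- `{u,v}` is a circular pair: a non-adjacent spanning pair. -/
def CircularPair (G : LoopGraph V) (u v : V) : Prop :=
  G.SpanningPair u v ∧ ¬ G.Adj u v

/-- Every vertex belongs to some circular pair. -/
def CircularlyPaired (G : LoopGraph V) : Prop := ∀ u, ∃ v, G.CircularPair u v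

/-- A walk with `k` edges: vertices `P 0, …, P k` with consecutive vertices adjacent. -/
def IsWalk (G : LoopGraph V) (k : ℕ) (P : ℕ → V) : Prop :=
  ∀ i < k, G.Adj (P i) (P (i + 1))

/-- Vertex `z` avoids the edge `ab`: every neighbour of `z` among `a, b` overlaps `z`,
and if `z` overlaps both `a` and `b` then `a, b` do not overlap each other. -/
def AvoidsEdge (G : LoopGraph V) (z a b : V) : Prop :=
  (G.Adj z a → G.Overlaps z a) ∧ (G.Adj z b → G.Overlaps z b) ∧
  (G.Overlaps z a → G.Overlaps z b → ¬ G.Overlaps a b)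

/-- Vertex `z` and the walk `P` (with `k` edges) avoid each other. -/
def AvoidsWalk (G : LoopGraph V) (z : V) (k : ℕ) (P : ℕ → V) : Prop :=
  (∀ i ≤ k, G.Adj z (P i) → G.Overlaps z (P i)) ∧
  (∀ i < k, G.Overlaps z (P i) → G.Overlaps z (P (i + 1)) →
    ¬ G.Overlaps (P i) (P (i + 1)))

/-- The walks `P` and `Q` (both with `k` edges) avoid each other. -/
def WalksAvoid (G : LoopGraph V) (k : ℕ) (P Q : ℕ → V) : Prop :=
  ∀ i < k, G.AvoidsEdge (P i) (Q i) (Q (i + 1)) ∧ G.AvoidsEdge (Q (i + 1)) (P i) (P (i + 1))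

/-- `{x,y}` is a `z`-invertible pair, i.e. an invertible pair anchored at `z`. -/
def ZInvertiblePair (G : LoopGraph V) (z x y : V) : Prop :=
  x ≠ y ∧ x ≠ z ∧ y ≠ z ∧
  ∃ k, ∃ P Q : ℕ → V, G.IsWalk k P ∧ G.IsWalk k Q ∧
    P 0 = x ∧ P k = y ∧ Q 0 = y ∧ Q k = x ∧
    G.WalksAvoid k P Q ∧ G.AvoidsWalk z k P ∧ G.AvoidsWalk z k Q

/-- `G` contains an anchored invertible pair. -/
def HasAnchoredInvertiblePair (G : LoopGraph V) : Prop :=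
  ∃ z x y, G.ZInvertiblePair z x y

end LoopGraph

/-!
Circular arcs: the circle is modelled as the half-open interval `[0,1)`;
an arc is described by its left and right endpoints (clockwise = increasing),
wrapping around if necessary.
-/

/-- Membership of the point `t` in the clockwise arc from `l` to `r`. -/
def arcMem (l r t : ℝ) : Prop :=
  (l ≤ r ∧ l ≤ t ∧ t ≤ r) ∨ (r < l ∧ (l ≤ t ∨ t ≤ r))

/-- The arc `[l₁,r₁]` is contained in the arc `[l₂,r₂]`. -/
def arcSubset (l₁ r₁ l₂ r₂ : ℝ) : Prop :=
  ∀ t ∈ Set.Ico (0 : ℝ) 1, arcMem l₁ r₁ t → arcMem l₂ r₂ t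

/-- The arc `[lu,ru]` properly contains the arc `[lv,rv]`. -/
def arcProperContains (lu ru lv rv : ℝ) : Prop :=
  arcSubset lv rv lu ru ∧ ¬ arcSubset lu ru lv rv

/-- The arcs `[lu,ru]` and `[lv,rv]` together cover the whole circle. -/
def arcsCover (lu ru lv rv : ℝ) : Prop :=
  ∀ t ∈ Set.Ico (0 : ℝ) 1, arcMem lu ru t ∨ arcMem lv rv t

/-- `b` lies strictly between `a` and `c` in the clockwise cyclic order on `[0,1)`. -/
def cycBtw (a b c : ℝ) : Prop :=
  (a < b ∧ b < c) ∨ (b < c ∧ c < a) ∨ (c < a ∧ a < b)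

/-- The four points `a, b, c, d` of `[0,1)` occur in this clockwise cyclic order. -/
def cyc4 (a b c d : ℝ) : Prop := cycBtw a b c ∧ cycBtw a c d

namespace LoopGraph

variable {V W : Type}

/-- `(l, r)` is a circular-arc representation of `G`: all endpoints are distinct and
two vertices are adjacent iff their arcs intersect. -/
def IsCARep (G : LoopGraph V) (l r : V → ℝ) : Prop :=
  (∀ v, l v ∈ Set.Ico (0 : ℝ) 1) ∧ (∀ v, r v ∈ Set.Ico (0 : ℝ) 1) ∧
  Function.Injective (Sum.elim l r) ∧
  ∀ u v, (G.Adj u v ↔ ∃ t ∈ Set.Ico (0 : ℝ) 1,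
    arcMem (l u) (r u) t ∧ arcMem (l v) (r v) t)

/-- `G` is a circular-arc graph. -/
def IsCircularArc (G : LoopGraph V) : Prop := ∃ l r : V → ℝ, G.IsCARep l r

/-- A normalized circular-arc representation of `G`. -/
def IsNormalizedRep (G : LoopGraph V) (l r : V → ℝ) : Prop :=
  G.IsCARep l r ∧
  ∀ u v, G.Adj u v → u ≠ v →
    (arcProperContains (l u) (r u) (l v) (r v) ↔ G.nbhd v ⊆ G.nbhd u) ∧
    (arcsCover (l u) (r u) (l v) (r v) ↔ G.TwoOverlapEdge u v)

/-- A circular-arc representation of the induced subgraph `G[X]` which is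
normalized with respect to `G`. -/
def IsNormalizedRepOn (G : LoopGraph V) (X : Set V) (l r : V → ℝ) : Prop :=
  (∀ v ∈ X, l v ∈ Set.Ico (0 : ℝ) 1) ∧ (∀ v ∈ X, r v ∈ Set.Ico (0 : ℝ) 1) ∧
  Set.InjOn l X ∧ Set.InjOn r X ∧ (∀ u ∈ X, ∀ v ∈ X, l u ≠ r v) ∧
  (∀ u ∈ X, ∀ v ∈ X,
    (G.Adj u v ↔ ∃ t ∈ Set.Ico (0 : ℝ) 1,
      arcMem (l u) (r u) t ∧ arcMem (l v) (r v) t)) ∧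
  (∀ u ∈ X, ∀ v ∈ X, G.Adj u v → u ≠ v →
    (arcProperContains (l u) (r u) (l v) (r v) ↔ G.nbhd v ⊆ G.nbhd u) ∧
    (arcsCover (l u) (r u) (l v) (r v) ↔ G.TwoOverlapEdge u v))

/-! Circular completions. -/

/-- `f` exhibits `G` as an induced subgraph of `H`. -/
def InducedEmb (G : LoopGraph V) (H : LoopGraph W) (f : V → W) : Prop :=
  Function.Injective f ∧ ∀ u v, (G.Adj u v ↔ H.Adj (f u) (f v))

/-- Every edge of `G` has the same type (inclusion / 1-overlap / 2-overlap)
in `G` and in `H`. -/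
def SameEdgeTypes (G : LoopGraph V) (H : LoopGraph W) (f : V → W) : Prop :=
  ∀ u v, G.Adj u v →
    ((G.InclusionEdge u v ↔ H.InclusionEdge (f u) (f v)) ∧
     (G.OneOverlapEdge u v ↔ H.OneOverlapEdge (f u) (f v)) ∧
     (G.TwoOverlapEdge u v ↔ H.TwoOverlapEdge (f u) (f v)))

/-- `H` (with embedding `f`) is a circular completion of `G`: a circularly-paired
graph with the fewest possible vertices containing `G` as an induced subgraph with
all edge types preserved. -/
def IsCircularCompletion (G : LoopGraph V) (H : LoopGraph W) (f : V → W) : Prop :=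
  Finite W ∧ G.InducedEmb H f ∧ G.SameEdgeTypes H f ∧ H.CircularlyPaired ∧
  ∀ (W' : Type) (H' : LoopGraph W') (f' : V → W'), Finite W' →
    G.InducedEmb H' f' → G.SameEdgeTypes H' f' → H'.CircularlyPaired →
    Nat.card W ≤ Nat.card W'

/-! The anchored Δ-knotting graph. -/

/-- `A(z)`: vertices nonadjacent to `z` or overlapping `z`. -/
def Aset (G : LoopGraph V) (z : V) : Set V := {u | ¬ G.Adj z u ∨ G.Overlaps z u}

/-- `x` and `y` are `uz`-connected. -/
def UZConnected (G : LoopGraph V) (u z x y : V) : Prop :=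
  ¬ G.InclusionEdge x u ∧ ¬ G.InclusionEdge y u ∧ ¬ G.InclusionEdge x z ∧
  ¬ G.InclusionEdge y z ∧ ¬ G.InclusionEdge u z ∧
  ∃ k, ∃ P : ℕ → V, G.IsWalk k P ∧ P 0 = x ∧ P k = y ∧
    G.AvoidsWalk u k P ∧ G.AvoidsWalk z k P

/-- `X` is a `uz`-component: a maximal set of pairwise `uz`-connected vertices. -/
def IsUZComponent (G : LoopGraph V) (u z : V) (X : Set V) : Prop :=
  X.Nonempty ∧ (∀ x ∈ X, ∀ y ∈ X, G.UZConnected u z x y) ∧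
  ∀ Y : Set V, X ⊆ Y → (∀ x ∈ Y, ∀ y ∈ Y, G.UZConnected u z x y) → Y = X

/-- Vertices of the `z`-anchored Δ-knotting graph: copies `(u, X)` of `u ∈ A(z)`,
one for each `uz`-component `X`. -/
def KnotVertex (G : LoopGraph V) (z : V) (p : V × Set V) : Prop :=
  p.1 ∈ G.Aset z ∧ G.IsUZComponent p.1 z p.2

/-- Edges of the `z`-anchored Δ-knotting graph: for each edge `uv` of `G` with
`u, v ∈ A(z)`, an edge between the copy of `u` for `X` and the copy of `v` for `Y`
whenever `v ∈ X` and `u ∈ Y`. -/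
def KnotAdj (G : LoopGraph V) (z : V) (p q : V × Set V) : Prop :=
  G.Adj p.1 q.1 ∧ p.1 ∈ G.Aset z ∧ q.1 ∈ G.Aset z ∧ q.1 ∈ p.2 ∧ p.1 ∈ q.2

/-- The `z`-anchored Δ-knotting graph of `G` is bipartite (it is 2-colourable). -/
def KnotBipartite (G : LoopGraph V) (z : V) : Prop :=
  ∃ c : V × Set V → Bool, ∀ p q, G.KnotVertex z p → G.KnotVertex z q →
    G.KnotAdj z p q → c p ≠ c q

/-! Non-inverting sets. -/

/-- `X` is a non-inverting set of `G`. -/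
def NonInvertingSet (G : LoopGraph V) (X : Set V) : Prop :=
  (∀ u ∈ X, ∀ v ∈ X, ¬ G.TwoOverlapEdge u v) ∧
  ¬ ∃ x ∈ X, ∃ y ∈ X, ∃ k, 0 < k ∧ ∃ P Q : ℕ → V,
      G.IsWalk k P ∧ G.IsWalk k Q ∧ (∀ i ≤ k, P i ∈ X) ∧ (∀ i ≤ k, Q i ∈ X) ∧
      P 0 = x ∧ P k = y ∧ Q 0 = y ∧ Q k = x ∧ G.WalksAvoid k P Q

end LoopGraph

/-!
Edge-labelled graphs: graphs (with loops) in which every edge is labelled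
inclusion or overlap, loops being labelled inclusion.
-/

structure ELGraph (V : Type) where
  Adj : V → V → Prop
  symm : ∀ u v, Adj u v → Adj v u
  refl : ∀ u, Adj u u
  /-- `Ovl u v` means the edge `uv` is labelled as an overlap edge. -/
  Ovl : V → V → Prop
  ovl_symm : ∀ u v, Ovl u v → Ovl v u
  ovl_adj : ∀ u v, Ovl u v → Adj u v
  ovl_irrefl : ∀ u, ¬ Ovl u u

namespace ELGraph

variable {V : Type}

/-- Closed neighbourhood `N[u]`. -/
def nbhd (G : ELGraph V) (u : V) : Set V := {v | G.Adj u v}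

/-- `uv` is (labelled as) an inclusion edge. -/
def InclEdge (G : ELGraph V) (u v : V) : Prop := G.Adj u v ∧ ¬ G.Ovl u v

/-- A walk with `k` edges. -/
def IsWalk (G : ELGraph V) (k : ℕ) (P : ℕ → V) : Prop :=
  ∀ i < k, G.Adj (P i) (P (i + 1))

/-- `z` avoids the edge `ab`: every neighbour of `z` among `a, b` overlaps `z`, and if
`z` overlaps both `a` and `b` then the edge `ab` is an inclusion edge. -/
def AvoidsEdge (G : ELGraph V) (z a b : V) : Prop :=
  (G.Adj z a → G.Ovl z a) ∧ (G.Adj z b → G.Ovl z b) ∧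
  (G.Ovl z a → G.Ovl z b → ¬ G.Ovl a b)

/-- The walks `P` and `Q` (both with `k` edges) avoid each other. -/
def WalksAvoid (G : ELGraph V) (k : ℕ) (P Q : ℕ → V) : Prop :=
  ∀ i < k, G.AvoidsEdge (P i) (Q i) (Q (i + 1)) ∧ G.AvoidsEdge (Q (i + 1)) (P i) (P (i + 1))

/-- The ordered pair `p` is related to the ordered pair `q`: there exist a walk from
`p.1` to `q.1` and a walk from `p.2` to `q.2`, of the same (positive) length, that
avoid each other. -/
def Related (G : ELGraph V) (p q : V × V) : Prop :=
  ∃ k, 0 < k ∧ ∃ P Q : ℕ → V, G.IsWalk k P ∧ G.IsWalk k Q ∧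
    P 0 = p.1 ∧ Q 0 = p.2 ∧ P k = q.1 ∧ Q k = q.2 ∧ G.WalksAvoid k P Q

/-- A Δ-implication class: a maximal set of pairwise related ordered pairs. -/
def IsDeltaClass (G : ELGraph V) (A : Set (V × V)) : Prop :=
  A.Nonempty ∧ (∀ p ∈ A, ∀ q ∈ A, G.Related p q) ∧
  ∀ B : Set (V × V), A ⊆ B → (∀ p ∈ B, ∀ q ∈ B, G.Related p q) → B = A

/-- `A⁻¹ = {(u,v) : (v,u) ∈ A}`. -/
def inv (A : Set (V × V)) : Set (V × V) := {p | p.swap ∈ A}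

/-- `span A`: the set of vertices incident to pairs of `A`. -/
def span (A : Set (V × V)) : Set V := {v | ∃ p ∈ A, v = p.1 ∨ v = p.2}

/-- `S` induces a clique. -/
def IsClique (G : ELGraph V) (S : Set V) : Prop := ∀ a ∈ S, ∀ b ∈ S, G.Adj a b

/-- A Δ-module. -/
def IsDeltaModule (G : ELGraph V) (S : Set V) : Prop :=
  S.Nonempty ∧
  (∀ x, x ∉ S →
    ((∀ s ∈ S, ¬ G.Adj x s) ∨ (∀ s ∈ S, G.InclEdge x s) ∨ (∀ s ∈ S, G.Ovl x s))) ∧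
  (¬ G.IsClique S → ∀ x, x ∉ S → ∀ s ∈ S, ¬ G.Ovl x s)

/-- A trivial Δ-module: the whole vertex set or a single vertex. -/
def TrivialModule (S : Set V) : Prop := S = Set.univ ∨ ∃ a : V, S = {a}

/-- `{a,b}` is a Δ-invertible pair: `(a,b)` is related to `(b,a)`. -/
def DeltaInvertiblePair (G : ELGraph V) (a b : V) : Prop := G.Related (a, b) (b, a)

/-- An interval ordering of an edge-labelled graph. -/
def IsIntervalOrdering (G : ELGraph V) (lt : V → V → Prop) : Prop :=
  IsStrictTotalOrder V lt ∧
  ¬ ∃ a b c, lt a b ∧ lt b c ∧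
    ((¬ G.Adj a b ∧ G.Adj a c) ∨
     (G.InclEdge a b ∧ ¬ G.Adj a c ∧ G.Adj b c) ∨
     (G.Ovl a b ∧ G.Adj a c ∧ ¬ G.Adj b c) ∨
     (G.Ovl a b ∧ G.Ovl b c ∧ G.InclEdge a c) ∨
     (G.InclEdge a b ∧ G.InclEdge b c ∧ G.Ovl a c))

/-- An interval representation of `G` consistent with its labelling. -/
def IsConsistentIntervalRep (G : ELGraph V) (l r : V → ℝ) : Prop :=
  (∀ v, l v ≤ r v) ∧
  (∀ u v, (G.Adj u v ↔ (Set.Icc (l u) (r u) ∩ Set.Icc (l v) (r v)).Nonempty)) ∧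
  (∀ u v, (G.Ovl u v ↔
    ((Set.Icc (l u) (r u) ∩ Set.Icc (l v) (r v)).Nonempty ∧
     ¬ Set.Icc (l u) (r u) ⊆ Set.Icc (l v) (r v) ∧
     ¬ Set.Icc (l v) (r v) ⊆ Set.Icc (l u) (r u))))

/-- A consistently edge-labelled graph: there is a transitive orientation `D` of its
inclusion edges (between distinct vertices) such that `D u v → N[v] ⊆ N[u]`. -/
def ConsistentlyLabelled (G : ELGraph V) : Prop :=
  ∃ D : V → V → Prop,
    (∀ u v, D u v → u ≠ v ∧ G.InclEdge u v) ∧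
    (∀ u v, u ≠ v → G.InclEdge u v → (D u v ↔ ¬ D v u)) ∧
    (∀ u v w, D u v → D v w → D u w) ∧
    (∀ u v, D u v → G.nbhd v ⊆ G.nbhd u)

end ELGraph

/-! ### Auxiliary geometric lemmas about circular arcs -/

lemma arcMem_left' (l r : ℝ) : arcMem l r l := by
  rcases le_or_gt l r with h|h
  · exact Or.inl ⟨h, le_rfl, h⟩
  · exact Or.inr ⟨h, Or.inl le_rfl⟩

lemma arcMem_right' (l r : ℝ) : arcMem l r r := by
  rcases le_or_gt l r with h|h
  · exact Or.inl ⟨h, h, le_rfl⟩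
  · exact Or.inr ⟨h, Or.inr le_rfl⟩

lemma arcMem_of_le {l r : ℝ} (h : l ≤ r) (t : ℝ) : arcMem l r t ↔ l ≤ t ∧ t ≤ r := by
  constructor
  · rintro (⟨_, a, b⟩|⟨c, _⟩)
    · exact ⟨a, b⟩
    · exact absurd h (not_le.mpr c)
  · rintro ⟨a, b⟩; exact Or.inl ⟨h, a, b⟩

lemma arcMem_of_lt {l r : ℝ} (h : r < l) (t : ℝ) : arcMem l r t ↔ (l ≤ t ∨ t ≤ r) := by
  constructor
  · rintro (⟨a, _, _⟩|⟨_, c⟩)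
    · exact absurd a (not_le.mpr h)
    · exact c
  · intro c; exact Or.inr ⟨h, c⟩

lemma arc_split {a b : ℝ} (h : a ≠ b) (t : ℝ) : arcMem a b t ∨ arcMem b a t := by
  rcases lt_or_gt_of_ne h with hab|hab
  · rw [arcMem_of_le (le_of_lt hab), arcMem_of_lt hab]
    rcases le_or_gt t a with h1|h1
    · exact Or.inr (Or.inr h1)
    · rcases le_or_gt b t with h2|h2
      · exact Or.inr (Or.inl h2)
      · exact Or.inl ⟨le_of_lt h1, le_of_lt h2⟩
  · rw [arcMem_of_lt hab, arcMem_of_le (le_of_lt hab)]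
    rcases le_or_gt a t with h1|h1
    · exact Or.inl (Or.inl h1)
    · rcases le_or_gt t b with h2|h2
      · exact Or.inl (Or.inr h2)
      · exact Or.inr ⟨le_of_lt h2, le_of_lt h1⟩

lemma arc_not_mem {l r : ℝ} (hl : l ∈ Set.Ico (0:ℝ) 1) (hr : r ∈ Set.Ico (0:ℝ) 1)
    (h : l ≠ r) : ∃ p ∈ Set.Ico (0:ℝ) 1, ¬ arcMem l r p := by
  obtain ⟨hl0, hl1⟩ := hl
  obtain ⟨hr0, hr1⟩ := hr
  rcases lt_or_gt_of_ne h with hlt|hgt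
  · refine ⟨(r + 1) / 2, ⟨by linarith, by linarith⟩, ?_⟩
    rw [arcMem_of_le (le_of_lt hlt)]
    rintro ⟨-, b⟩; linarith
  · refine ⟨(r + l) / 2, ⟨by linarith, by linarith⟩, ?_⟩
    rw [arcMem_of_lt hgt]
    rintro (a|a) <;> linarith

/-- Nesting with the same left endpoint: `[l,t] ⊆ [l,r]` when `t ∈ [l,r]`. -/
lemma arc_nest_left {l r t s : ℝ} (h1 : arcMem l r t) (h2 : arcMem l t s) :
    arcMem l r s := by
  rcases le_or_gt l r with c1|c1 <;> rcases le_or_gt l t with c2|c2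
  · rw [arcMem_of_le c1] at h1 ⊢; rw [arcMem_of_le c2] at h2
    exact ⟨h2.1, by linarith [h1.2, h2.2]⟩
  · rw [arcMem_of_le c1] at h1; exact absurd h1.1 (not_le.mpr c2)
  · rw [arcMem_of_lt c1] at h1 ⊢; rw [arcMem_of_le c2] at h2
    exact Or.inl h2.1
  · rw [arcMem_of_lt c1] at h1 ⊢; rw [arcMem_of_lt c2] at h2
    rcases h1 with h1|h1
    · exact absurd h1 (not_le.mpr c2)
    · rcases h2 with h2|h2
      · exact Or.inl h2
      · exact Or.inr (by linarith)

/-- Nesting with the same right endpoint: `[b,c] ⊆ [a,c]` when `b ∈ [a,c]`. -/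
lemma arc_nest_right {a c b t : ℝ} (h1 : arcMem a c b) (h2 : arcMem b c t) :
    arcMem a c t := by
  rcases le_or_gt a c with c1|c1 <;> rcases le_or_gt b c with c2|c2
  · rw [arcMem_of_le c1] at h1 ⊢; rw [arcMem_of_le c2] at h2
    exact ⟨by linarith [h1.1, h2.1], h2.2⟩
  · rw [arcMem_of_le c1] at h1; exact absurd h1.2 (not_le.mpr c2)
  · rw [arcMem_of_lt c1] at h1 ⊢; rw [arcMem_of_le c2] at h2
    exact Or.inr h2.2
  · rw [arcMem_of_lt c1] at h1 ⊢; rw [arcMem_of_lt c2] at h2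
    rcases h1 with h1|h1
    · rcases h2 with h2|h2
      · exact Or.inl (by linarith)
      · exact Or.inr h2
    · exact absurd h1 (not_le.mpr c2)

/-- If `s ∈ [a,r]` and `t ∉ [a,r]`, then `r ∈ [s,t]`. -/
lemma arc_between {a r s t : ℝ} (h1 : arcMem a r s) (h2 : ¬ arcMem a r t) :
    arcMem s t r := by
  rcases le_or_gt a r with c1|c1
  · rw [arcMem_of_le c1] at h1 h2
    push_neg at h2
    rcases le_or_gt a t with h3|h3
    · have h4 : r < t := h2 h3
      rw [arcMem_of_le (show s ≤ t by linarith [h1.2])]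
      exact ⟨h1.2, le_of_lt h4⟩
    · rw [arcMem_of_lt (show t < s by linarith [h1.1])]
      exact Or.inl h1.2
  · rw [arcMem_of_lt c1] at h1 h2
    push_neg at h2
    obtain ⟨h2a, h2b⟩ := h2
    rcases h1 with h1|h1
    · rw [arcMem_of_lt (show t < s by linarith)]
      exact Or.inr (le_of_lt h2b)
    · rw [arcMem_of_le (show s ≤ t by linarith)]
      exact ⟨h1, le_of_lt h2b⟩

/-- If `s ∈ [a,c]` and `c ∈ [a,r]`, then `c ∈ [s,r]`. -/
lemma arc_shrink {a c s r : ℝ} (h1 : arcMem a c s) (h2 : arcMem a r c) :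
    arcMem s r c := by
  rcases le_or_gt a c with c1|c1 <;> rcases le_or_gt a r with c2|c2
  · rw [arcMem_of_le c1] at h1; rw [arcMem_of_le c2] at h2
    rw [arcMem_of_le (show s ≤ r by linarith [h1.2, h2.2])]
    exact ⟨h1.2, h2.2⟩
  · rw [arcMem_of_le c1] at h1; rw [arcMem_of_lt c2] at h2
    rw [arcMem_of_lt (show r < s by linarith [h1.1])]
    exact Or.inl h1.2
  · rw [arcMem_of_lt c1] at h1; rw [arcMem_of_le c2] at h2
    exact absurd h2.1 (not_le.mpr c1)
  · rw [arcMem_of_lt c1] at h1; rw [arcMem_of_lt c2] at h2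
    have hcr : c ≤ r := by
      rcases h2 with h2|h2
      · exact absurd h2 (not_le.mpr c1)
      · exact h2
    rcases h1 with h1|h1
    · rw [arcMem_of_lt (show r < s by linarith)]
      exact Or.inr hcr
    · rw [arcMem_of_le (show s ≤ r by linarith)]
      exact ⟨h1, hcr⟩

lemma cycBtw_arcMem {a b c : ℝ} (h : cycBtw a b c) : arcMem a c b := by
  rcases h with ⟨h1, h2⟩|⟨h1, h2⟩|⟨h1, h2⟩
  · exact (arcMem_of_le (by linarith) b).mpr ⟨le_of_lt h1, le_of_lt h2⟩
  · exact (arcMem_of_lt h2 b).mpr (Or.inr (le_of_lt h1))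
  · exact (arcMem_of_lt h1 b).mpr (Or.inl (le_of_lt h2))

lemma cycBtw_ne {a b c : ℝ} (h : cycBtw a b c) : a ≠ b ∧ b ≠ c ∧ a ≠ c := by
  refine ⟨fun e => ?_, fun e => ?_, fun e => ?_⟩ <;>
    (subst e; rcases h with ⟨h1, h2⟩|⟨h1, h2⟩|⟨h1, h2⟩ <;> linarith)

lemma cycBtw_rot {a b c : ℝ} (h : cycBtw a b c) : cycBtw b c a := by
  unfold cycBtw at *; tauto

/-- Two intersecting arcs: one contains the left endpoint of the other. -/
lemma arc_meet {l1 r1 l2 r2 t : ℝ} (h1 : arcMem l1 r1 t) (h2 : arcMem l2 r2 t) :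
    arcMem l1 r1 l2 ∨ arcMem l2 r2 l1 := by
  rcases le_or_gt l1 r1 with c1|c1 <;> rcases le_or_gt l2 r2 with c2|c2
  · rw [arcMem_of_le c1] at h1 ⊢; rw [arcMem_of_le c2] at h2
    rcases le_or_gt l1 l2 with h|h
    · exact Or.inl ⟨h, by linarith [h1.2, h2.1]⟩
    · exact Or.inr (by rw [arcMem_of_le c2]; exact ⟨le_of_lt h, by linarith [h2.2, h1.1]⟩)
  · rw [arcMem_of_le c1] at h1 ⊢; rw [arcMem_of_lt c2] at h2
    rcases le_or_gt l2 l1 with h|h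
    · exact Or.inr (by rw [arcMem_of_lt c2]; exact Or.inl h)
    · rcases h2 with h2|h2
      · exact Or.inl ⟨le_of_lt h, by linarith [h1.2]⟩
      · exact Or.inr (by rw [arcMem_of_lt c2]; exact Or.inr (by linarith [h1.1]))
  · rw [arcMem_of_lt c1] at h1 ⊢; rw [arcMem_of_le c2] at h2
    rcases le_or_gt l1 l2 with h|h
    · exact Or.inl (Or.inl h)
    · rcases h1 with h1|h1
      · exact Or.inr (by rw [arcMem_of_le c2]; exact ⟨by linarith [h2.1], by linarith [h2.2]⟩)
      · exact Or.inl (Or.inr (by linarith [h2.2]))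
  · rw [arcMem_of_lt c1] at h1 ⊢; rw [arcMem_of_lt c2] at h2
    rcases le_or_gt l1 l2 with h|h
    · exact Or.inl (Or.inl h)
    · exact Or.inr (by rw [arcMem_of_lt c2]; exact Or.inl (le_of_lt h))

/-- The main quantifier-free combinatorial lemma used in the inclusion case. -/
lemma arc_wrap {lx rx ly ry p : ℝ} (h1 : arcMem lx rx ly) (h2 : arcMem lx rx ry)
    (h3 : ¬ arcMem ly rx ry) (h4 : ¬ arcMem lx rx p) : arcMem ly ry p := by
  rcases le_or_gt lx rx with c1|c1
  · rw [arcMem_of_le c1] at h1 h2 h4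
    push_neg at h4
    rw [arcMem_of_le h1.2] at h3
    push_neg at h3
    have hryly : ry < ly := by
      rcases le_or_gt ly ry with h|h
      · exact absurd (h3 h) (not_lt.mpr h2.2)
      · exact h
    rw [arcMem_of_lt hryly]
    rcases le_or_gt lx p with h|h
    · exact Or.inl (by linarith [h4 h, h1.2])
    · exact Or.inr (by linarith [h2.1])
  · rw [arcMem_of_lt c1] at h1 h2 h4
    push_neg at h4
    obtain ⟨h4a', h4b'⟩ := h4
    rcases h1 with h1|h1
    · -- lx ≤ ly, so rx < ly : wrap case for arc y starting after the gap
      rw [arcMem_of_lt (show rx < ly by linarith)] at h3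
      push_neg at h3
      obtain ⟨h3a', h3b'⟩ := h3
      have hlxry : lx ≤ ry := by
        rcases h2 with h2|h2
        · exact h2
        · linarith
      rw [arcMem_of_lt h3a']
      exact Or.inr (by linarith)
    · -- ly ≤ rx
      rw [arcMem_of_le h1] at h3
      push_neg at h3
      rcases le_or_gt ly ry with h|h
      · have h3' : rx < ry := h3 h
        have hlxry : lx ≤ ry := by
          rcases h2 with h2|h2
          · exact h2
          · linarith
        rw [arcMem_of_le (show ly ≤ ry by linarith)]
        exact ⟨by linarith, by linarith⟩
      · rw [arcMem_of_lt h]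
        exact Or.inl (by linarith)

lemma LoopGraph.Overlaps.symm' {V : Type} {G : LoopGraph V} {u v : V}
    (h : G.Overlaps u v) : G.Overlaps v u :=
  ⟨G.symm _ _ h.1, h.2.2, h.2.1⟩

lemma avoids_swap {V : Type} {G : LoopGraph V} {z a b : V}
    (h : G.AvoidsEdge z a b) : G.AvoidsEdge z b a :=
  ⟨h.2.1, h.1, fun h1 h2 hab => h.2.2 h2 h1 hab.symm'⟩

/-- In a normalized representation, the arc of neither endpoint of an overlap edge
is contained in the arc of the other. -/
lemma not_arcSubset_of_overlaps {V : Type} (G : LoopGraph V) (l r : V → ℝ)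
    (hrep : G.IsNormalizedRep l r) {u v : V} (hO : G.Overlaps u v) :
    ¬ arcSubset (l v) (r v) (l u) (r u) := by
  obtain ⟨⟨hl, hr, hinj, hadj⟩, hN⟩ := hrep
  have hne : u ≠ v := by rintro rfl; exact hO.2.1 subset_rfl
  intro S1
  have hnp : ¬ arcProperContains (l u) (r u) (l v) (r v) :=
    fun hp => hO.2.2 (((hN u v hO.1 hne).1).mp hp)
  have S2 : arcSubset (l u) (r u) (l v) (r v) := by
    by_contra hS2; exact hnp ⟨S1, hS2⟩
  have hluv : l u ≠ l v := fun e => hne (Sum.inl_injective (hinj (show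
    Sum.elim l r (Sum.inl u) = Sum.elim l r (Sum.inl v) from e)))
  have hlru : l u ≠ r u := fun e => Sum.inl_ne_inr (hinj (show
    Sum.elim l r (Sum.inl u) = Sum.elim l r (Sum.inr u) from e))
  obtain ⟨p, hp, hpn⟩ := arc_not_mem (hl u) (hr u) hlru
  apply hpn
  have hlvu : arcMem (l u) (r u) (l v) := S1 (l v) (hl v) (arcMem_left' _ _)
  have hluv' : arcMem (l v) (r v) (l u) := S2 (l u) (hl u) (arcMem_left' _ _)
  rcases arc_split hluv p with h|h
  · exact arc_nest_left hlvu h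
  · exact S1 p hp (arc_nest_left hluv' h)

/-- Key lemma: if `xy` is an edge, `l z` lies cyclically between `l x` and `l y`,
and `l y` belongs to the arc of `x`, then `z` does not avoid the edge `xy`. -/
lemma key_not_avoid {V : Type} (G : LoopGraph V) (l r : V → ℝ)
    (hrep : G.IsNormalizedRep l r) (x y z : V) (hxy : G.Adj x y)
    (hbtw : cycBtw (l x) (l z) (l y)) (hly : arcMem (l x) (r x) (l y))
    (hz : G.AvoidsEdge z x y) : False := by
  obtain ⟨hl, hr, hinj, hadj⟩ := hrep.1
  have hN := hrep.2
  have lnr : ∀ a b : V, l a ≠ r b := fun a b e => Sum.inl_ne_inr (hinj (show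
    Sum.elim l r (Sum.inl a) = Sum.elim l r (Sum.inr b) from e))
  obtain ⟨nab1, nab2, nab3⟩ := cycBtw_ne hbtw
  have hxyne : x ≠ y := fun e => nab3 (congrArg l e)
  have hlz_x : arcMem (l x) (r x) (l z) := arc_nest_left hly (cycBtw_arcMem hbtw)
  have hAzx : G.Adj z x := (hadj z x).mpr ⟨l z, hl z, arcMem_left' _ _, hlz_x⟩
  have hOzx : G.Overlaps z x := hz.1 hAzx
  have hns := not_arcSubset_of_overlaps G l r hrep hOzx.symm'
  rw [arcSubset] at hns
  push_neg at hns
  obtain ⟨t0, ht0, ht0z, ht0x⟩ := hns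
  have hrx_z : arcMem (l z) (r z) (r x) := arc_nest_left ht0z (arc_between hlz_x ht0x)
  have hly_zrx : arcMem (l z) (r x) (l y) := arc_shrink (cycBtw_arcMem hbtw) hly
  have hly_z : arcMem (l z) (r z) (l y) := arc_nest_left hrx_z hly_zrx
  have hAzy : G.Adj z y := (hadj z y).mpr ⟨l y, hl y, hly_z, arcMem_left' _ _⟩
  have hOzy : G.Overlaps z y := hz.2.1 hAzy
  have hnxy : ¬ G.Overlaps x y := hz.2.2 hOzx hOzy
  have hcomp : G.nbhd x ⊆ G.nbhd y ∨ G.nbhd y ⊆ G.nbhd x := by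
    by_contra hc
    push_neg at hc
    exact hnxy ⟨hxy, fun h => hc.1 h, fun h => hc.2 h⟩
  rcases hcomp with hc|hc
  · -- `N[x] ⊆ N[y]`, so the arc of `y` contains the arc of `x`: impossible since
    -- the arc of `x` contains `l y`.
    have S : arcSubset (l x) (r x) (l y) (r y) :=
      ((hN y x (G.symm _ _ hxy) (Ne.symm hxyne)).1.mpr hc).1
    have hlx_y : arcMem (l y) (r y) (l x) := S (l x) (hl x) (arcMem_left' _ _)
    obtain ⟨p, hp, hpn⟩ := arc_not_mem (hl y) (hr y) (lnr y y)
    apply hpn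
    rcases arc_split nab3 p with h|h
    · exact S p hp (arc_nest_left hly h)
    · exact arc_nest_left hlx_y h
  · -- `N[y] ⊆ N[x]`: then the arc of `z` contains the arc of `y`,
    -- contradicting that `z` overlaps `y`.
    have S : arcSubset (l y) (r y) (l x) (r x) :=
      ((hN x y hxy hxyne).1.mpr hc).1
    have hry_x : arcMem (l x) (r x) (r y) := S (r y) (hr y) (arcMem_right' _ _)
    have hry_yrx : arcMem (l y) (r x) (r y) := by
      by_contra hW
      obtain ⟨p, hp, hpn⟩ := arc_not_mem (hl x) (hr x) (lnr x x)
      exact hpn (S p hp (arc_wrap hly hry_x hW hpn))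
    exact not_arcSubset_of_overlaps G l r hrep hOzy (fun t ht hty =>
      arc_nest_left hrx_z (arc_nest_right hly_zrx (arc_nest_left hry_yrx hty)))

/-- In a normalized circular-arc representation of `G`, if `xy` is an
edge and the left endpoints occur in clockwise circular order `l x < l z < l y < l w`,
then at least one of `z`, `w` does not avoid the edge `xy`. -/
theorem normalizedRep_not_both_avoid
    {V : Type} [Fintype V] (G : LoopGraph V) (l r : V → ℝ)
    (hrep : G.IsNormalizedRep l r) (x y z w : V) (hxy : G.Adj x y)
    (hord : cyc4 (l x) (l z) (l y) (l w)) :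
    ¬ G.AvoidsEdge z x y ∨ ¬ G.AvoidsEdge w x y := by
  obtain ⟨t, ht, htx, hty⟩ := (hrep.1.2.2.2 x y).mp hxy
  rcases arc_meet htx hty with h|h
  · exact Or.inl fun hz => key_not_avoid G l r hrep x y z hxy hord.1 h hz
  · exact Or.inr fun hw => key_not_avoid G l r hrep y x w (G.symm _ _ hxy)
      (cycBtw_rot hord.2) h (avoids_swap hw)
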